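/- Let a, b, p, q be real numbers with a > p ≥ 0 and b > q ≥ 0. Then the 2-step nilpotent Lie algebra (ℝ⁶, β_{a,b,p,q}) is isomorphic to the complex Heisenberg algebra h₃^ℂ; that is, there exists a linear automorphism φ of ℝ⁶ carrying β_{a,b,p,q} to the alternating bilinear map c with c(e₁,e₃) = e₅, c(e₄,e₂) = e₅, c(e₁,e₄) = e₆, c(e₂,e₃) = e₆, and c(eᵢ,eⱼ) = 0 for all other pairs i < j, in the sense that φ(β_{a,b,p,q}(x,y)) = c(φ(x), φ(y)) for all x, y ∈ ℝ⁶. -/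

import Mathlib

/-- The 2-step nilpotent bracket `β_{a,b,p,q}` on `ℝ⁶`, with
`β(e₁,e₂) = (a+p)e₅`, `β(e₃,e₄) = (a−p)e₅`, `β(e₁,e₃) = (b+q)e₆`, `β(e₂,e₄) = −(b−q)e₆`. -/
noncomputable def betaBr (a b p q : ℝ) (x y : Fin 6 → ℝ) : Fin 6 → ℝ :=
  ((a + p) * (x 0 * y 1 - x 1 * y 0) + (a - p) * (x 2 * y 3 - x 3 * y 2)) •
    (Pi.single 4 1 : Fin 6 → ℝ) +
  ((b + q) * (x 0 * y 2 - x 2 * y 0) - (b - q) * (x 1 * y 3 - x 3 * y 1)) •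
    (Pi.single 5 1 : Fin 6 → ℝ)

/-- The bracket of the complex Heisenberg Lie algebra `h₃^ℂ = (0,0,0,0,13+42,14+23)`:
`c(e₁,e₃) = e₅ = c(e₄,e₂)`, `c(e₁,e₄) = e₆ = c(e₂,e₃)`. -/
noncomputable def cH3C (x y : Fin 6 → ℝ) : Fin 6 → ℝ :=
  (x 0 * y 2 - x 2 * y 0 + x 3 * y 1 - x 1 * y 3) • (Pi.single 4 1 : Fin 6 → ℝ) +
  (x 0 * y 3 - x 3 * y 0 + x 1 * y 2 - x 2 * y 1) • (Pi.single 5 1 : Fin 6 → ℝ)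

theorem myCons_val_five {α : Type*} (a b c d e f : α) : ![a,b,c,d,e,f] (5 : Fin 6) = f := rfl

/-- auxiliary linear map for the forward direction -/
noncomputable def phiL (s u c5 c6 : ℝ) : (Fin 6 → ℝ) →ₗ[ℝ] (Fin 6 → ℝ) where
  toFun x := ![x 0, u * x 3, s * x 1, x 2, c5 * x 4, c6 * x 5]
  map_add' x y := by funext i; fin_cases i <;> simp [myCons_val_five] <;> ring
  map_smul' r x := by funext i; fin_cases i <;> simp [myCons_val_five] <;> ring

/-- auxiliary linear map for the inverse direction -/
noncomputable def psiL (s u c5 c6 : ℝ) : (Fin 6 → ℝ) →ₗ[ℝ] (Fin 6 → ℝ) where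
  toFun y := ![y 0, s⁻¹ * y 2, y 3, u⁻¹ * y 1, c5⁻¹ * y 4, c6⁻¹ * y 5]
  map_add' x y := by funext i; fin_cases i <;> simp [myCons_val_five] <;> ring
  map_smul' r x := by funext i; fin_cases i <;> simp [myCons_val_five] <;> ring

/-- for `a > p ≥ 0` and `b > q ≥ 0`, the 2-step nilpotent Lie algebra
`(ℝ⁶, β_{a,b,p,q})` is isomorphic to the complex Heisenberg algebra `h₃^ℂ`. -/
theorem beta_iso_h3C (a b p q : ℝ) (hp : 0 ≤ p) (ha : p < a) (hq : 0 ≤ q) (hb : q < b) :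
    ∃ φ : (Fin 6 → ℝ) ≃ₗ[ℝ] (Fin 6 → ℝ),
      ∀ x y : Fin 6 → ℝ, φ (betaBr a b p q x y) = cH3C (φ x) (φ y) := by
  have hap : (0:ℝ) < a + p := by linarith
  have ham : (0:ℝ) < a - p := by linarith
  have hbp : (0:ℝ) < b + q := by linarith
  have hbm : (0:ℝ) < b - q := by linarith
  set u : ℝ := Real.sqrt ((a - p) * (b - q) / ((a + p) * (b + q))) with hu_def
  have hupos : 0 < u := Real.sqrt_pos.mpr (by positivity)
  have husq : u ^ 2 = (a - p) * (b - q) / ((a + p) * (b + q)) := by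
    rw [hu_def, sq, Real.mul_self_sqrt (by positivity)]
  set s : ℝ := u * (a + p) / (a - p) with hs_def
  have hspos : 0 < s := by positivity
  set c5 : ℝ := u / (a - p) with hc5_def
  have hc5pos : 0 < c5 := by positivity
  set c6 : ℝ := 1 / (b + q) with hc6_def
  have hc6pos : 0 < c6 := by positivity
  have h1 : c5 * (a + p) = s := by rw [hc5_def, hs_def]; ring
  have h2 : c5 * (a - p) = u := by rw [hc5_def]; field_simp
  have h3 : c6 * (b + q) = 1 := by rw [hc6_def]; field_simp
  have h4 : c6 * (b - q) = s * u := by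
    have : s * u = u ^ 2 * (a + p) / (a - p) := by rw [hs_def, sq]; ring
    rw [this, husq, hc6_def]
    field_simp
  refine ⟨LinearEquiv.ofLinear (phiL s u c5 c6) (psiL s u c5 c6) ?_ ?_, ?_⟩
  · refine LinearMap.ext fun y => funext fun i => ?_
    fin_cases i <;>
      simp [phiL, psiL, myCons_val_five, mul_div_cancel₀, hspos.ne', hupos.ne',
        hc5pos.ne', hc6pos.ne']
  · refine LinearMap.ext fun y => funext fun i => ?_
    fin_cases i <;>
      simp [phiL, psiL, myCons_val_five, hspos.ne', hupos.ne', hc5pos.ne', hc6pos.ne']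
  · intro x y
    funext i
    fin_cases i <;>
      simp [phiL, betaBr, cH3C, myCons_val_five, Pi.single_apply, LinearEquiv.ofLinear_apply]
    · linear_combination (x 0 * y 1 - x 1 * y 0) * h1 + (x 2 * y 3 - x 3 * y 2) * h2
    · linear_combination (x 0 * y 2 - x 2 * y 0) * h3 - (x 1 * y 3 - x 3 * y 1) * h4
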